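/- Let F be a field, N ⊴ G groups, R : N → GL(W) an irreducible G-invariant representation with End_{FN}(W) = F, and X : G → GL(W) a projective representation extending R with factor set α ∈ Z²(G,F*) constant on cosets of N (i.e. α(g₁x₁,g₂x₂) = α(g₁,g₂) for x₁,x₂ ∈ N). For i = 1,2, let Yᵢ : G → GL(Uᵢ) be an irreducible projective representation with factor set α⁻¹ that is trivial on N, and define Sᵢ : G → GL(Uᵢ ⊗_F W) by Sᵢ(g) = Yᵢ(g) ⊗ X(g). If S₁ and S₂ are equivalent representations of G, then Y₁ and Y₂ are strictly equivalent: there is an F-linear isomorphism f : U₁ → U₂ with f(Y₁(g)u) = Y₂(g)f(u) for all g ∈ G and u ∈ U₁. -/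

import Mathlib

open scoped TensorProduct DirectSum

section Preliminaries

variable (F : Type*) [Field F]

/-- Isomorphism (equivalence) of representations: an `F`-linear equivalence intertwining
the two actions. -/
def RepIso {G : Type*} [Monoid G] {V V' : Type*} [AddCommMonoid V] [Module F V]
    [AddCommMonoid V'] [Module F V'] (ρ : Representation F G V) (τ : Representation F G V') :
    Prop :=
  ∃ e : V ≃ₗ[F] V', ∀ (g : G) (v : V), e (ρ g v) = τ g (e v)

/-- Irreducibility of a representation: the space is nonzero and admits no invariant
subspaces other than `⊥` and `⊤`. -/
def IsIrreducibleRep {G : Type*} [Monoid G] {V : Type*} [AddCommMonoid V] [Module F V]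
    (ρ : Representation F G V) : Prop :=
  Nontrivial V ∧ ∀ p : Submodule F V, (∀ g : G, ∀ v ∈ p, ρ g v ∈ p) → p = ⊥ ∨ p = ⊤

/-- The subrepresentation on an invariant submodule. -/
def subRep {G : Type*} [Monoid G] {V : Type*} [AddCommMonoid V] [Module F V]
    (ρ : Representation F G V) (p : Submodule F V) (hp : ∀ g : G, ∀ v ∈ p, ρ g v ∈ p) :
    Representation F G ↥p where
  toFun g := (ρ g).restrict (fun v hv => hp g v hv)
  map_one' := by ext v; simp [LinearMap.restrict_apply]
  map_mul' g₁ g₂ := by ext v; simp [LinearMap.restrict_apply]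

/-- A representation is completely reducible if the underlying module is the sum of its
irreducible invariant submodules. -/
def IsCompletelyReducibleRep {G : Type*} [Monoid G] {V : Type*} [AddCommMonoid V]
    [Module F V] (ρ : Representation F G V) : Prop :=
  sSup {q : Submodule F V |
    ∃ hq : ∀ g : G, ∀ v ∈ q, ρ g v ∈ q, IsIrreducibleRep F (subRep F ρ q hq)} = ⊤

/-- The homogeneous component determined by `σ`: the sum of all irreducible invariant
submodules whose subrepresentation is isomorphic to `σ`. -/
noncomputable def homComponent {G : Type*} [Monoid G] {V W : Type*} [AddCommMonoid V]
    [Module F V] [AddCommMonoid W] [Module F W] (ρ : Representation F G V)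
    (σ : Representation F G W) : Submodule F V :=
  sSup {q : Submodule F V |
    ∃ hq : ∀ g : G, ∀ v ∈ q, ρ g v ∈ q,
      IsIrreducibleRep F (subRep F ρ q hq) ∧ RepIso F (subRep F ρ q hq) σ}

/-- The set of all homogeneous components of a representation. -/
noncomputable def homComponents {G : Type*} [Monoid G] {V : Type*} [AddCommMonoid V]
    [Module F V] (ρ : Representation F G V) : Set (Submodule F V) :=
  {S | ∃ (q : Submodule F V) (hq : ∀ g : G, ∀ v ∈ q, ρ g v ∈ q),
      IsIrreducibleRep F (subRep F ρ q hq) ∧ S = homComponent F ρ (subRep F ρ q hq)}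

/-- A representation `ρ` lies over `σ` if it admits an invariant submodule whose
subrepresentation is isomorphic to `σ`. -/
def LiesOver {G : Type*} [Monoid G] {V W : Type*} [AddCommMonoid V] [Module F V]
    [AddCommMonoid W] [Module F W] (ρ : Representation F G V) (σ : Representation F G W) :
    Prop :=
  ∃ (q : Submodule F V) (hq : ∀ g : G, ∀ v ∈ q, ρ g v ∈ q),
    RepIso F (subRep F ρ q hq) σ

/-- The stabilizer in `G` of a subspace of a representation space. -/
def stabSubgroup {G : Type*} [Group G] {V : Type*} [AddCommGroup V] [Module F V]
    (ρ : Representation F G V) (S : Submodule F V) : Subgroup G where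
  carrier := {g : G | S.map (ρ g) = S}
  one_mem' := by
    show S.map (ρ 1) = S
    rw [map_one, Module.End.one_eq_id]
    exact Submodule.map_id S
  mul_mem' := by
    intro a b ha hb
    show S.map (ρ (a * b)) = S
    rw [map_mul, Module.End.mul_eq_comp, Submodule.map_comp, hb, ha]
  inv_mem' := by
    intro a ha
    show S.map (ρ a⁻¹) = S
    conv_lhs => rw [← ha]
    rw [← Submodule.map_comp, ← Module.End.mul_eq_comp, ← map_mul, inv_mul_cancel, map_one,
      Module.End.one_eq_id, Submodule.map_id]

theorem stabSubgroup_mapsTo {G : Type*} [Group G] {V : Type*} [AddCommGroup V] [Module F V]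
    (ρ : Representation F G V) (S : Submodule F V) :
    ∀ g : ↥(stabSubgroup F ρ S), ∀ v ∈ S, ρ (g : G) v ∈ S := by
  intro g v hv
  have hg : S.map (ρ (g : G)) = S := g.2
  have := Submodule.mem_map_of_mem (f := ρ (g : G)) hv
  rwa [hg] at this

/-- Outer tensor product of representations of two groups. -/
noncomputable def outerRep {G₁ G₂ : Type*} [Monoid G₁] [Monoid G₂] {V₁ V₂ : Type*}
    [AddCommMonoid V₁] [Module F V₁] [AddCommMonoid V₂] [Module F V₂]
    (ρ₁ : Representation F G₁ V₁) (ρ₂ : Representation F G₂ V₂) :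
    Representation F (G₁ × G₂) (V₁ ⊗[F] V₂) :=
  Representation.tprod (ρ₁.comp (MonoidHom.fst G₁ G₂)) (ρ₂.comp (MonoidHom.snd G₁ G₂))

/-- A projective representation with factor set `α`. -/
def IsProjRep {G : Type*} [Group G] {W : Type*} [AddCommGroup W] [Module F W]
    (X : G → (W →ₗ[F] W)) (α : G → G → Fˣ) : Prop :=
  (∀ g : G, Function.Bijective (X g)) ∧
    ∀ g₁ g₂ : G, (X g₁) ∘ₗ (X g₂) = ((α g₁ g₂ : F)) • X (g₁ * g₂)

/-- Irreducibility of a projective representation: no proper nonzero invariant subspace. -/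
def IsProjIrred {G : Type*} [Group G] {W : Type*} [AddCommGroup W] [Module F W]
    (X : G → (W →ₗ[F] W)) : Prop :=
  Nontrivial W ∧ ∀ p : Submodule F W, (∀ g : G, ∀ w ∈ p, X g w ∈ p) → p = ⊥ ∨ p = ⊤

/-- `D` is a system of representatives for the `(H₁,H₂)`-double cosets in `G`. -/
def IsDCosetReps {G : Type*} [Group G] (H₁ H₂ : Subgroup G) (D : Set G) : Prop :=
  ∀ g : G, ∃! d : G, d ∈ D ∧ ∃ h₁ ∈ H₁, ∃ h₂ ∈ H₂, g = h₁ * d * h₂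

end Preliminaries

section Induction

variable (F : Type*) [Field F] {G : Type*} [Group G] (H : Subgroup G)
variable {W : Type*} [AddCommGroup W] [Module F W] (σ : Representation F ↥H W)

/-- The submodule of relations defining the induced module `FG ⊗_{FH} W` as a quotient
of `FG ⊗_F W`. -/
noncomputable def indRel : Submodule (MonoidAlgebra F G) (MonoidAlgebra F G ⊗[F] W) :=
  Submodule.span (MonoidAlgebra F G)
    {z | ∃ (x : H) (w : W),
      z = (MonoidAlgebra.single (x : G) (1 : F)) ⊗ₜ[F] w
            - (1 : MonoidAlgebra F G) ⊗ₜ[F] (σ x w)}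

/-- The underlying space of the induced module `ind_H^G W = FG ⊗_{FH} W`. -/
noncomputable def IndCar := (MonoidAlgebra F G ⊗[F] W) ⧸ indRel F H σ

noncomputable instance : AddCommGroup (IndCar F H σ) :=
  inferInstanceAs (AddCommGroup ((MonoidAlgebra F G ⊗[F] W) ⧸ indRel F H σ))

noncomputable instance : Module (MonoidAlgebra F G) (IndCar F H σ) :=
  inferInstanceAs (Module (MonoidAlgebra F G) ((MonoidAlgebra F G ⊗[F] W) ⧸ indRel F H σ))

noncomputable instance : Module F (IndCar F H σ) :=
  inferInstanceAs (Module F ((MonoidAlgebra F G ⊗[F] W) ⧸ indRel F H σ))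

noncomputable instance : IsScalarTower F (MonoidAlgebra F G) (IndCar F H σ) :=
  inferInstanceAs (IsScalarTower F (MonoidAlgebra F G)
    ((MonoidAlgebra F G ⊗[F] W) ⧸ indRel F H σ))

/-- The induced representation of `G` on `ind_H^G W = FG ⊗_{FH} W`. -/
noncomputable def IndRep : Representation F G (IndCar F H σ) where
  toFun g :=
    { toFun := fun v => (MonoidAlgebra.single g (1 : F) : MonoidAlgebra F G) • v
      map_add' := fun a b => smul_add _ a b
      map_smul' := fun c v => smul_comm _ c v }
  map_one' := by
    ext v
    show MonoidAlgebra.single (1 : G) (1 : F) • v = v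
    rw [← MonoidAlgebra.one_def, one_smul]
  map_mul' g₁ g₂ := by
    ext v
    show MonoidAlgebra.single (g₁ * g₂) (1 : F) • v = _
    rw [show (MonoidAlgebra.single (g₁ * g₂) (1 : F) : MonoidAlgebra F G)
          = MonoidAlgebra.single g₁ 1 * MonoidAlgebra.single g₂ 1 by
        rw [MonoidAlgebra.single_mul_single, one_mul], mul_smul]
    rfl

end Induction

section DirectSums

variable (F : Type*) [Field F] {G : Type*} [Monoid G]

/-- The direct sum of a family of representations. -/
noncomputable def dsumRep {ι : Type*} {V : ι → Type*} [∀ i, AddCommGroup (V i)]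
    [∀ i, Module F (V i)] (ρ : ∀ i, Representation F G (V i)) :
    Representation F G (⨁ i, V i) where
  toFun g := DFinsupp.mapRange.linearMap (fun i => ρ i g)
  map_one' := by
    simp only [map_one]
    exact DFinsupp.mapRange.linearMap_id
  map_mul' g₁ g₂ := by
    simp only [map_mul, Module.End.mul_eq_comp]
    exact DFinsupp.mapRange.linearMap_comp (fun i => ρ i g₁) (fun i => ρ i g₂)

end DirectSums

section Conjugation

variable {G : Type*} [Group G]

/-- Conjugation `x ↦ g x g⁻¹` as a monoid homomorphism of a normal subgroup. -/
def conjHom {N : Subgroup G} (hN : N.Normal) (g : G) : ↥N →* ↥N where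
  toFun x := ⟨g * (x : G) * g⁻¹, hN.conj_mem x.1 x.2 g⟩
  map_one' := by ext; simp
  map_mul' x y := by ext; simp [mul_assoc]

/-- The conjugate subgroup `xHx⁻¹`. -/
def conjSubgroup (x : G) (H : Subgroup G) : Subgroup G :=
  H.map (MulAut.conj x).toMonoidHom

/-- Conjugating back: the homomorphism `K → H`, `k ↦ x⁻¹ k x`, for `K ≤ xHx⁻¹`. -/
def unconjHom (x : G) (H : Subgroup G) {K : Subgroup G} (hK : K ≤ conjSubgroup x H) :
    ↥K →* ↥H where
  toFun k := ⟨x⁻¹ * (k : G) * x, by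
    obtain ⟨h, hh, e⟩ := hK k.2
    have : x⁻¹ * (k : G) * x = h := by
      rw [← e]; simp [MulAut.conj_apply, mul_assoc]
    rw [this]; exact hh⟩
  map_one' := by ext; simp
  map_mul' a b := by
    ext
    show x⁻¹ * (↑a * ↑b) * x = (x⁻¹ * ↑a * x) * (x⁻¹ * ↑b * x)
    group

/-- The homomorphism `K ∩ xHx⁻¹ → H` (with the source regarded as a subgroup of `K`),
given by `k ↦ x⁻¹ k x`. -/
def mackeyHom (x : G) (H K : Subgroup G) :
    ↥((K ⊓ conjSubgroup x H).subgroupOf K) →* ↥H where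
  toFun l := ⟨x⁻¹ * ((l : ↥K) : G) * x, by
    have h2 : ((l : ↥K) : G) ∈ K ⊓ conjSubgroup x H := l.2
    obtain ⟨h, hh, e⟩ := h2.2
    have : x⁻¹ * ((l : ↥K) : G) * x = h := by
      rw [← e]; simp [MulAut.conj_apply, mul_assoc]
    rw [this]; exact hh⟩
  map_one' := by ext; simp
  map_mul' a b := by
    ext
    show x⁻¹ * (↑↑a * ↑↑b) * x = (x⁻¹ * ↑↑a * x) * (x⁻¹ * ↑↑b * x)
    group

end Conjugation


section Aux
variable {F : Type*} [Field F]

lemma tmul_right_injective' {U W : Type*} [AddCommGroup U] [Module F U]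
    [AddCommGroup W] [Module F W] {w₀ : W} (hw : w₀ ≠ 0) :
    Function.Injective (fun u : U => u ⊗ₜ[F] w₀) := by
  have hℓ : Function.Injective (LinearMap.toSpanSingleton F W w₀) := by
    intro a b hab
    simp only [LinearMap.toSpanSingleton_apply] at hab
    have : (a - b) • w₀ = 0 := by rw [sub_smul, hab, sub_self]
    rcases smul_eq_zero.mp this with h | h
    · exact sub_eq_zero.mp h
    · exact absurd h hw
  have h1 : Function.Injective (LinearMap.lTensor U (LinearMap.toSpanSingleton F W w₀)) :=
    Module.Flat.lTensor_preserves_injective_linearMap _ hℓ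
  have key : ∀ u : U, u ⊗ₜ[F] w₀ =
      LinearMap.lTensor U (LinearMap.toSpanSingleton F W w₀) ((TensorProduct.rid F U).symm u) := by
    intro u
    rw [TensorProduct.rid_symm_apply, LinearMap.lTensor_tmul,
      LinearMap.toSpanSingleton_apply, one_smul]
  intro a b hab
  simp only at hab
  rw [key a, key b] at hab
  exact (TensorProduct.rid F U).symm.injective (h1 hab)

lemma exists_tmul_form {N' : Type*} [Monoid N'] {W U : Type*}
    [AddCommGroup W] [Module F W] [AddCommGroup U] [Module F U]
    (σ : Representation F N' W) (hW : Nontrivial W)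
    (hEnd : ∀ f : W →ₗ[F] W,
      (∀ (n : N') (w : W), f (σ n w) = σ n (f w)) → ∃ c : F, ∀ w : W, f w = c • w)
    (ψ : W →ₗ[F] U ⊗[F] W)
    (hψ : ∀ (n : N') (w : W),
      ψ (σ n w) = TensorProduct.map LinearMap.id (σ n) (ψ w)) :
    ∃ u : U, ∀ w : W, ψ w = u ⊗ₜ[F] w := by
  classical
  set b := Module.Basis.ofVectorSpace F U with hb
  set ι := Module.Basis.ofVectorSpaceIndex F U
  set E : U ⊗[F] W ≃ₗ[F] (ι →₀ W) :=
    (TensorProduct.congr b.repr (LinearEquiv.refl F W)).trans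
      (TensorProduct.finsuppScalarLeft F W ι) with hE
  have hEtmul : ∀ (u : U) (w : W) (i : ι), E (u ⊗ₜ[F] w) i = b.repr u i • w := by
    intro u w i
    simp [hE, TensorProduct.congr_tmul]
  have hEequiv : ∀ (n : N') (z : U ⊗[F] W) (i : ι),
      E (TensorProduct.map LinearMap.id (σ n) z) i = σ n (E z i) := by
    intro n z i
    induction z using TensorProduct.induction_on with
    | zero => simp
    | tmul u w => simp [hEtmul]
    | add x y hx hy => simp [map_add, hx, hy, Finsupp.add_apply]
  have hcomp : ∀ i : ι, ∃ c : F, ∀ w : W, E (ψ w) i = c • w := by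
    intro i
    refine hEnd ((Finsupp.lapply i) ∘ₗ E.toLinearMap ∘ₗ ψ) ?_
    intro n w
    simp only [LinearMap.comp_apply, LinearEquiv.coe_coe, Finsupp.lapply_apply]
    rw [hψ, hEequiv]
  choose c hc using hcomp
  obtain ⟨w₀, hw₀⟩ := exists_ne (0 : W)
  have hsupp : ∀ i : ι, c i ≠ 0 → i ∈ (E (ψ w₀)).support := by
    intro i hi
    rw [Finsupp.mem_support_iff, hc i w₀]
    exact smul_ne_zero hi hw₀
  set cf : ι →₀ F := Finsupp.onFinset (E (ψ w₀)).support c hsupp with hcf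
  refine ⟨b.repr.symm cf, fun w => ?_⟩
  apply E.injective
  ext i
  rw [hc i w, hEtmul, LinearEquiv.apply_symm_apply]
  rfl

end Aux

/-- Theorem 3.9(b) (Clifford): with `N ⊴ G`, `R : N → GL(W)` irreducible, `G`-invariant and
with `End_{FN}(W) = F`, and `X : G → GL(W)` a projective representation extending `R` whose
factor set `α` is constant on cosets of `N`: if `Y₁, Y₂` are irreducible projective
representations of `G` trivial on `N` with factor set `α⁻¹` and the ordinary
representations `Sᵢ(g) = Yᵢ(g) ⊗ X(g)` are equivalent, then `Y₁` and `Y₂` are strictly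
equivalent. -/
theorem strict_equivalence_of_tensor_factors
    (F : Type*) [Field F] {G : Type*} [Group G] (N : Subgroup G) (hN : N.Normal)
    (W : Type*) [AddCommGroup W] [Module F W] (σ : Representation F ↥N W)
    (hσ : IsIrreducibleRep F σ)
    (hGinv : ∀ g : G, RepIso F (σ.comp (conjHom hN g)) σ)
    (hEnd : ∀ f : W →ₗ[F] W,
      (∀ (n : ↥N) (w : W), f (σ n w) = σ n (f w)) → ∃ c : F, ∀ w : W, f w = c • w)
    (X : G → (W →ₗ[F] W)) (α : G → G → Fˣ)
    (hX : IsProjRep F X α)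
    (hXR : ∀ n : ↥N, X (n : G) = σ n)
    (hα : ∀ (g₁ g₂ : G) (x₁ x₂ : ↥N), α (g₁ * (x₁ : G)) (g₂ * (x₂ : G)) = α g₁ g₂)
    (U₁ : Type*) [AddCommGroup U₁] [Module F U₁] (Y₁ : G → (U₁ →ₗ[F] U₁))
    (U₂ : Type*) [AddCommGroup U₂] [Module F U₂] (Y₂ : G → (U₂ →ₗ[F] U₂))
    (hY₁ : IsProjRep F Y₁ (fun g₁ g₂ => (α g₁ g₂)⁻¹)) (hY₁irr : IsProjIrred F Y₁)
    (hY₁N : ∀ n : ↥N, Y₁ (n : G) = LinearMap.id)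
    (hY₂ : IsProjRep F Y₂ (fun g₁ g₂ => (α g₁ g₂)⁻¹)) (hY₂irr : IsProjIrred F Y₂)
    (hY₂N : ∀ n : ↥N, Y₂ (n : G) = LinearMap.id)
    (ρS₁ : Representation F G (U₁ ⊗[F] W))
    (hS₁ : ∀ g : G, ρS₁ g = TensorProduct.map (Y₁ g) (X g))
    (ρS₂ : Representation F G (U₂ ⊗[F] W))
    (hS₂ : ∀ g : G, ρS₂ g = TensorProduct.map (Y₂ g) (X g))
    (hequiv : RepIso F ρS₁ ρS₂) :
    ∃ f : U₁ ≃ₗ[F] U₂, ∀ (g : G) (u : U₁), f (Y₁ g u) = Y₂ g (f u) := by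
  obtain ⟨e, he⟩ := hequiv
  have : Nontrivial W := hσ.1
  obtain ⟨w₀, hw₀⟩ := exists_ne (0 : W)
  have inj₁ : Function.Injective (fun u : U₁ => u ⊗ₜ[F] w₀) := tmul_right_injective' hw₀
  have inj₂ : Function.Injective (fun u : U₂ => u ⊗ₜ[F] w₀) := tmul_right_injective' hw₀
  have hNequiv : ∀ (n : ↥N) (z : U₁ ⊗[F] W),
      e (TensorProduct.map LinearMap.id (σ n) z)
        = TensorProduct.map LinearMap.id (σ n) (e z) := by
    intro n z
    have h1 := he (n : G) z
    rw [hS₁, hS₂, hY₁N n, hY₂N n, hXR n] at h1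
    exact h1
  have hNequiv' : ∀ (n : ↥N) (z : U₂ ⊗[F] W),
      e.symm (TensorProduct.map LinearMap.id (σ n) z)
        = TensorProduct.map LinearMap.id (σ n) (e.symm z) := by
    intro n z
    apply e.injective
    rw [e.apply_symm_apply, hNequiv, e.apply_symm_apply]
  have hψ1 : ∀ u : U₁, ∃ u' : U₂, ∀ w : W, e (u ⊗ₜ[F] w) = u' ⊗ₜ[F] w := by
    intro u
    refine exists_tmul_form σ hσ.1 hEnd
      (e.toLinearMap ∘ₗ ((TensorProduct.mk F U₁ W) u)) (fun n w => ?_)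
    simp only [LinearMap.comp_apply, LinearEquiv.coe_coe, TensorProduct.mk_apply]
    rw [show u ⊗ₜ[F] (σ n w) = TensorProduct.map LinearMap.id (σ n) (u ⊗ₜ[F] w) by
      rw [TensorProduct.map_tmul]; rfl, hNequiv]
  have hψ2 : ∀ v : U₂, ∃ v' : U₁, ∀ w : W, e.symm (v ⊗ₜ[F] w) = v' ⊗ₜ[F] w := by
    intro v
    refine exists_tmul_form σ hσ.1 hEnd
      (e.symm.toLinearMap ∘ₗ ((TensorProduct.mk F U₂ W) v)) (fun n w => ?_)
    simp only [LinearMap.comp_apply, LinearEquiv.coe_coe, TensorProduct.mk_apply]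
    rw [show v ⊗ₜ[F] (σ n w) = TensorProduct.map LinearMap.id (σ n) (v ⊗ₜ[F] w) by
      rw [TensorProduct.map_tmul]; rfl, hNequiv']
  choose f0 hf0 using hψ1
  choose g0 hg0 using hψ2
  have hadd : ∀ u u' : U₁, f0 (u + u') = f0 u + f0 u' := by
    intro u u'
    apply inj₂
    show f0 (u + u') ⊗ₜ[F] w₀ = (f0 u + f0 u') ⊗ₜ[F] w₀
    rw [← hf0, TensorProduct.add_tmul, TensorProduct.add_tmul, map_add, hf0, hf0]
  have hsmul : ∀ (c : F) (u : U₁), f0 (c • u) = c • f0 u := by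
    intro c u
    apply inj₂
    show f0 (c • u) ⊗ₜ[F] w₀ = (c • f0 u) ⊗ₜ[F] w₀
    rw [← hf0, ← TensorProduct.smul_tmul', ← TensorProduct.smul_tmul', map_smul, hf0]
  set fL : U₁ →ₗ[F] U₂ :=
    { toFun := f0, map_add' := hadd, map_smul' := hsmul } with hfL
  have hgadd : ∀ v v' : U₂, g0 (v + v') = g0 v + g0 v' := by
    intro v v'
    apply inj₁
    show g0 (v + v') ⊗ₜ[F] w₀ = (g0 v + g0 v') ⊗ₜ[F] w₀
    rw [← hg0, TensorProduct.add_tmul, TensorProduct.add_tmul, map_add, hg0, hg0]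
  have hgsmul : ∀ (c : F) (v : U₂), g0 (c • v) = c • g0 v := by
    intro c v
    apply inj₁
    show g0 (c • v) ⊗ₜ[F] w₀ = (c • g0 v) ⊗ₜ[F] w₀
    rw [← hg0, ← TensorProduct.smul_tmul', ← TensorProduct.smul_tmul', map_smul, hg0]
  set gL : U₂ →ₗ[F] U₁ :=
    { toFun := g0, map_add' := hgadd, map_smul' := hgsmul } with hgL
  have hgf : ∀ u : U₁, g0 (f0 u) = u := by
    intro u
    apply inj₁
    show g0 (f0 u) ⊗ₜ[F] w₀ = u ⊗ₜ[F] w₀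
    rw [← hg0, ← hf0, e.symm_apply_apply]
  have hfg : ∀ v : U₂, f0 (g0 v) = v := by
    intro v
    apply inj₂
    show f0 (g0 v) ⊗ₜ[F] w₀ = v ⊗ₜ[F] w₀
    rw [← hf0, ← hg0, e.apply_symm_apply]
  refine ⟨LinearEquiv.ofLinear fL gL (by ext v; exact hfg v) (by ext u; exact hgf u), ?_⟩
  intro g u
  obtain ⟨w, hwX⟩ := (hX.1 g).2 w₀
  show fL (Y₁ g u) = Y₂ g (fL u)
  apply inj₂
  show f0 (Y₁ g u) ⊗ₜ[F] w₀ = (Y₂ g (f0 u)) ⊗ₜ[F] w₀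
  have h1 := he g (u ⊗ₜ[F] w)
  rw [hS₁, hS₂, hf0 u w, TensorProduct.map_tmul, TensorProduct.map_tmul, hwX, hf0] at h1
  exact h1
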